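/- Let X be a quasiconvex metric space, Ω ⊆ X a bounded domain, f : Ω → [-∞,∞] and g : Ω → [0,∞] Borel. Then g is an upper gradient of f with respect to the metric space (Ω,d) if and only if g is an upper gradient of f with respect to the metric space Ω_M = (Ω,dM). Consequently, equipping both spaces with the measure μ|_Ω, one has N^{1,p}(Ω) = N^{1,p}(Ω_M) with equal norms for every 1 ≤ p < ∞. -/

import Mathlib

open Set MeasureTheory Filter ENNReal NNReal Metric Topology

noncomputable section

/-- Extended absolute value of the "difference" of two extended reals; with Mathlib's
`EReal` subtraction conventions, `erealAbs (a - b) = ∞` whenever both `a` and `b`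
are infinite, matching the convention for the upper gradient inequality. -/
def erealAbs (a : EReal) : ℝ≥0∞ :=
  if a = ⊤ ∨ a = ⊥ then ⊤ else ENNReal.ofReal |a.toReal|

/-- Variation of `γ` over `[a,b]` computed with respect to an arbitrary
distance-like function `ρ`, as a supremum over partitions
`a = t 0 ≤ t 1 ≤ ⋯ ≤ t n = b`. -/
def variationWith {Y : Type*} (ρ : Y → Y → ℝ≥0∞) (γ : ℝ → Y) (a b : ℝ) : ℝ≥0∞ :=
  ⨆ P ∈ {P : ℕ × (ℕ → ℝ) |
      Monotone P.2 ∧ (∀ i, P.2 i ∈ Set.Icc a b) ∧ P.2 0 = a ∧ P.2 P.1 = b},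
    ∑ i ∈ Finset.range P.1, ρ (γ (P.2 i)) (γ (P.2 (i + 1)))

/-- `γ : [0,L] → Y` is parameterized by arc length with respect to `ρ`. -/
def IsArcLengthParamWith {Y : Type*} (ρ : Y → Y → ℝ≥0∞) (γ : ℝ → Y) (L : ℝ) : Prop :=
  ∀ s t : ℝ, s ∈ Set.Icc 0 L → t ∈ Set.Icc 0 L → s ≤ t →
    variationWith ρ γ s t = ENNReal.ofReal (t - s)

/-- `g` is an upper gradient of `f` on `S` with respect to the distance `ρ`:
for every (nonconstant, compact, rectifiable) curve in `S` parameterized by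
arc length, the upper gradient inequality holds. -/
def IsUpperGradientWith {Y : Type*} (ρ : Y → Y → ℝ≥0∞) (S : Set Y)
    (g : Y → ℝ≥0∞) (f : Y → EReal) : Prop :=
  ∀ (γ : ℝ → Y) (L : ℝ), 0 < L → Set.MapsTo γ (Set.Icc 0 L) S →
    IsArcLengthParamWith ρ γ L →
    erealAbs (f (γ L) - f (γ 0)) ≤ ∫⁻ t in Set.Icc 0 L, g (γ t)

/-- Upper gradient on `S` with respect to the ambient metric. -/
def IsUpperGradientOn {Y : Type*} [PseudoEMetricSpace Y] (S : Set Y)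
    (g : Y → ℝ≥0∞) (f : Y → EReal) : Prop :=
  IsUpperGradientWith (fun x y => edist x y) S g f

/-- The `p`-th power of the Newtonian norm of `f` on `S` with respect to the
measure `m` and the distance `ρ`:
`∫_S |f|^p dm + inf {∫_S g^p dm : g a Borel upper gradient of f on S w.r.t. ρ}`. -/
def npEnergyWith {Y : Type*} [MeasurableSpace Y] (m : Measure Y) (p : ℝ)
    (ρ : Y → Y → ℝ≥0∞) (S : Set Y) (f : Y → ℝ) : ℝ≥0∞ :=
  (∫⁻ y in S, ENNReal.ofReal |f y| ^ p ∂m) +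
    ⨅ g ∈ {g : Y → ℝ≥0∞ | Measurable g ∧
        IsUpperGradientWith ρ S g (fun y => (f y : EReal))},
      ∫⁻ y in S, g y ^ p ∂m

/-- The `p`-th power of the Newtonian norm of `f` on `S ⊆ Y` (w.r.t. the ambient metric). -/
def npEnergyOn {Y : Type*} [PseudoEMetricSpace Y] [MeasurableSpace Y]
    (m : Measure Y) (p : ℝ) (S : Set Y) (f : Y → ℝ) : ℝ≥0∞ :=
  npEnergyWith m p (fun x y => edist x y) S f

/-- `f ∈ N^{1,p}(S, m)`. -/
def MemNp {Y : Type*} [PseudoEMetricSpace Y] [MeasurableSpace Y]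
    (m : Measure Y) (p : ℝ) (S : Set Y) (f : Y → ℝ) : Prop :=
  Measurable f ∧ npEnergyOn m p S f ≠ ⊤

/-- The Sobolev capacity `C_p(E; S)` of `E ⊆ S`. -/
def CpOn {Y : Type*} [PseudoEMetricSpace Y] [MeasurableSpace Y]
    (m : Measure Y) (p : ℝ) (S E : Set Y) : ℝ≥0∞ :=
  ⨅ u ∈ {u : Y → ℝ | MemNp m p S u ∧ ∀ x ∈ E, u x = 1}, npEnergyOn m p S u

/-- The capacity `bC_p(E; S)` of `E ⊆ closure S`. -/
def bCpOn {Y : Type*} [PseudoEMetricSpace Y] [MeasurableSpace Y]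
    (m : Measure Y) (p : ℝ) (S E : Set Y) : ℝ≥0∞ :=
  ⨅ u ∈ {u : Y → ℝ | MemNp m p S u ∧ (∀ x ∈ E ∩ S, 1 ≤ u x) ∧
      ∀ x ∈ E ∩ (closure S \ S),
        (1 : EReal) ≤ Filter.liminf (fun y => (u y : EReal)) (nhdsWithin x S)},
    npEnergyOn m p S u

/-- The Mazurkiewicz distance on `S`. -/
def mazDist {Y : Type*} [PseudoEMetricSpace Y] (S : Set Y) (x y : Y) : ℝ≥0∞ :=
  ⨅ E ∈ {E : Set Y | E ⊆ S ∧ IsConnected E ∧ x ∈ E ∧ y ∈ E}, EMetric.diam E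

/-- The inner metric on `S`: the infimum of lengths of curves in `S` joining
`x` and `y` (`∞` if there are none). -/
def innerDist {Y : Type*} [PseudoEMetricSpace Y] (S : Set Y) (x y : Y) : ℝ≥0∞ :=
  ⨅ c ∈ {c : (ℝ → Y) × ℝ × ℝ | c.2.1 ≤ c.2.2 ∧
      ContinuousOn c.1 (Set.Icc c.2.1 c.2.2) ∧
      Set.MapsTo c.1 (Set.Icc c.2.1 c.2.2) S ∧ c.1 c.2.1 = x ∧ c.1 c.2.2 = y},
    eVariationOn c.1 (Set.Icc c.2.1 c.2.2)

/-- `S` is `L`-quasiconvex: any two points of `S` can be joined by a curve in `S`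
of length at most `L` times their distance. -/
def LQuasiconvexOn {Y : Type*} [PseudoMetricSpace Y] (S : Set Y) (L : ℝ) : Prop :=
  ∀ x ∈ S, ∀ y ∈ S, ∃ (γ : ℝ → Y) (a b : ℝ), a ≤ b ∧
    ContinuousOn γ (Set.Icc a b) ∧ Set.MapsTo γ (Set.Icc a b) S ∧
    γ a = x ∧ γ b = y ∧ eVariationOn γ (Set.Icc a b) ≤ ENNReal.ofReal (L * dist x y)

/-- A quasiconvex metric space. -/
def QuasiconvexSpace (Y : Type*) [PseudoMetricSpace Y] : Prop :=
  ∃ L : ℝ, 1 ≤ L ∧ LQuasiconvexOn (Set.univ : Set Y) L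

/-- A bounded domain: a bounded nonempty open connected set. -/
def IsBoundedDomain {Y : Type*} [PseudoMetricSpace Y] (Ω : Set Y) : Prop :=
  IsOpen Ω ∧ IsConnected Ω ∧ Bornology.IsBounded Ω

/-- `Ω` is finitely connected at the boundary. -/
def FinConnAtBoundary {Y : Type*} [MetricSpace Y] (Ω : Set Y) : Prop :=
  ∀ x₀ ∈ frontier Ω, ∀ r : ℝ, 0 < r → ∃ G : Set Y, IsOpen G ∧ x₀ ∈ G ∧
    G ⊆ Metric.ball x₀ r ∧
    {C : Set Y | ∃ x ∈ G ∩ Ω, C = connectedComponentIn (G ∩ Ω) x}.Finite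

/-- The standing assumption on the measure: every ball has positive finite measure. -/
def BallRegular {Y : Type*} [PseudoMetricSpace Y] [MeasurableSpace Y]
    (m : Measure Y) : Prop :=
  ∀ (x : Y) (r : ℝ), 0 < r → 0 < m (Metric.ball x r) ∧ m (Metric.ball x r) < ⊤

/-- The measure `m` is (globally) doubling. -/
def DoublingMeasure' {Y : Type*} [PseudoMetricSpace Y] [MeasurableSpace Y]
    (m : Measure Y) : Prop :=
  ∃ C : ℝ≥0, 0 < C ∧ ∀ (x : Y) (r : ℝ), 0 < r →
    m (Metric.ball x (2 * r)) ≤ C * m (Metric.ball x r)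

/-- `(Y, m)` supports a `p`-Poincaré inequality. -/
def PoincareInequality {Y : Type*} [MetricSpace Y] [MeasurableSpace Y]
    (m : Measure Y) (p : ℝ) : Prop :=
  ∃ C lam : ℝ, 0 < C ∧ 1 ≤ lam ∧
    ∀ (x : Y) (r : ℝ), 0 < r → ∀ f : Y → ℝ, Integrable f m →
      ∀ g : Y → ℝ≥0∞, Measurable g →
        IsUpperGradientOn (Set.univ : Set Y) g (fun y => (f y : EReal)) →
        ENNReal.ofReal (⨍ y in Metric.ball x r,
            |f y - ⨍ z in Metric.ball x r, f z ∂m| ∂m) ≤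
          ENNReal.ofReal (C * Metric.diam (Metric.ball x r)) *
            ((∫⁻ y in Metric.ball x (lam * r), g y ^ p ∂m) /
              m (Metric.ball x (lam * r))) ^ (1 / p)

section Helpers

variable {Y : Type*} [MetricSpace Y]

lemma edist_le_mazDist (S : Set Y) (x y : Y) : edist x y ≤ mazDist S x y :=
  le_iInf₂ fun _E hE => EMetric.edist_le_diam_of_mem hE.2.2.1 hE.2.2.2

lemma sum_le_variationWith {ρ : Y → Y → ℝ≥0∞} {γ : ℝ → Y} {a b : ℝ}
    {P : ℕ × (ℕ → ℝ)}
    (hP : P ∈ {P : ℕ × (ℕ → ℝ) |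
      Monotone P.2 ∧ (∀ i, P.2 i ∈ Set.Icc a b) ∧ P.2 0 = a ∧ P.2 P.1 = b}) :
    ∑ i ∈ Finset.range P.1, ρ (γ (P.2 i)) (γ (P.2 (i + 1))) ≤ variationWith ρ γ a b := by
  unfold variationWith
  exact le_biSup
    (fun P : ℕ × (ℕ → ℝ) => ∑ i ∈ Finset.range P.1, ρ (γ (P.2 i)) (γ (P.2 (i + 1)))) hP

lemma variationWith_mono {ρ ρ' : Y → Y → ℝ≥0∞} (h : ∀ x y, ρ x y ≤ ρ' x y)
    (γ : ℝ → Y) (a b : ℝ) : variationWith ρ γ a b ≤ variationWith ρ' γ a b :=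
  iSup₂_le fun _P hP =>
    le_trans (Finset.sum_le_sum fun _i _ => h _ _) (sum_le_variationWith hP)

lemma rho_le_variationWith (ρ : Y → Y → ℝ≥0∞) (γ : ℝ → Y) {a b : ℝ} (hab : a ≤ b) :
    ρ (γ a) (γ b) ≤ variationWith ρ γ a b := by
  have hmem : (⟨1, fun i => if i = 0 then a else b⟩ : ℕ × (ℕ → ℝ)) ∈
      {P : ℕ × (ℕ → ℝ) |
        Monotone P.2 ∧ (∀ i, P.2 i ∈ Set.Icc a b) ∧ P.2 0 = a ∧ P.2 P.1 = b} := by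
    refine ⟨?_, fun i => ?_, by simp, by simp⟩
    · intro i j hij
      simp only
      split_ifs with hi hj hj
      · exact le_rfl
      · exact hab
      · exact absurd (Nat.le_zero.mp (hj ▸ hij)) hi
      · exact le_rfl
    · simp only
      split_ifs
      · exact ⟨le_rfl, hab⟩
      · exact ⟨hab, le_rfl⟩
  have := sum_le_variationWith (ρ := ρ) (γ := γ) hmem
  simpa using this

lemma variationWith_edist_eq (γ : ℝ → Y) {a b : ℝ} (hab : a ≤ b) :
    variationWith (fun x y => edist x y) γ a b = eVariationOn γ (Set.Icc a b) := by
  apply le_antisymm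
  · refine iSup₂_le fun P hP => ?_
    obtain ⟨hmono, hmem, -, -⟩ := hP
    calc ∑ i ∈ Finset.range P.1, edist (γ (P.2 i)) (γ (P.2 (i + 1)))
        = ∑ i ∈ Finset.range P.1, edist (γ (P.2 (i + 1))) (γ (P.2 i)) := by
          simp [edist_comm]
      _ ≤ eVariationOn γ (Set.Icc a b) := eVariationOn.sum_le (f := γ) (n := P.1) hmono hmem
  · refine iSup_le fun p => ?_
    obtain ⟨n, u, hu, hus⟩ := p
    set v : ℕ → ℝ := fun i => if i = 0 then a else if i ≤ n + 1 then u (i - 1) else b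
      with hvdef
    have hv0 : v 0 = a := by simp [hvdef]
    have hvi : ∀ i, i ≠ 0 → i ≤ n + 1 → v i = u (i - 1) := by
      intro i h1 h2
      rw [hvdef]
      simp only
      rw [if_neg h1, if_pos h2]
    have hvb : ∀ i, n + 2 ≤ i → v i = b := by
      intro i h
      rw [hvdef]
      simp only
      rw [if_neg (by omega), if_neg (by omega)]
    have hvlast : v (n + 2) = b := hvb _ le_rfl
    have hvmono : Monotone v := by
      apply monotone_nat_of_le_succ
      intro i
      rcases Nat.lt_or_ge i (n + 2) with h | h
      · rcases Nat.eq_zero_or_pos i with rfl | h0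
        · rw [hv0, hvi 1 one_ne_zero (by omega)]
          simpa using (hus 0).1
        · rcases Nat.lt_or_ge i (n + 1) with h1 | h1
          · rw [hvi i (by omega) (by omega), hvi (i + 1) (by omega) (by omega)]
            exact hu (by omega)
          · have hieq : i = n + 1 := by omega
            subst hieq
            rw [hvi (n + 1) (by omega) le_rfl, hvb (n + 2) le_rfl]
            simpa using (hus n).2
      · rw [hvb i h, hvb (i + 1) (by omega)]
    have hvmem : ∀ i, v i ∈ Set.Icc a b := by
      intro i
      rcases Nat.eq_zero_or_pos i with rfl | h0
      · rw [hv0]; exact ⟨le_rfl, hab⟩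
      · rcases Nat.lt_or_ge i (n + 2) with h | h
        · rw [hvi i (by omega) (by omega)]; exact hus _
        · rw [hvb i h]; exact ⟨hab, le_rfl⟩
    have hPmem : (⟨n + 2, v⟩ : ℕ × (ℕ → ℝ)) ∈
        {P : ℕ × (ℕ → ℝ) |
          Monotone P.2 ∧ (∀ i, P.2 i ∈ Set.Icc a b) ∧ P.2 0 = a ∧ P.2 P.1 = b} :=
      ⟨hvmono, hvmem, hv0, hvlast⟩
    have key : ∀ j ∈ Finset.range n,
        edist (γ (u (j + 1))) (γ (u j)) = edist (γ (v (j + 1))) (γ (v (j + 2))) := by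
      intro j hj
      have hj' : j < n := Finset.mem_range.mp hj
      rw [hvi (j + 1) (by omega) (by omega), hvi (j + 2) (by omega) (by omega)]
      simp [edist_comm]
    calc ∑ i ∈ Finset.range n, edist (γ (u (i + 1))) (γ (u i))
        = ∑ i ∈ Finset.range n, edist (γ (v (i + 1))) (γ (v (i + 1 + 1))) := by
          refine Finset.sum_congr rfl fun j hj => ?_
          rw [key j hj]
      _ ≤ ∑ i ∈ Finset.range (n + 1), edist (γ (v (i + 1))) (γ (v (i + 1 + 1))) :=
          Finset.sum_le_sum_of_subset (Finset.range_subset_range.2 (by omega))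
      _ ≤ ∑ i ∈ Finset.range (n + 2), edist (γ (v i)) (γ (v (i + 1))) := by
          rw [Finset.sum_range_succ' (fun i => edist (γ (v i)) (γ (v (i + 1)))) (n + 1)]
          exact le_self_add
      _ ≤ variationWith (fun x y => edist x y) γ a b := sum_le_variationWith hPmem

lemma variationWith_edist_add (γ : ℝ → Y) {a b c : ℝ} (hab : a ≤ b) (hbc : b ≤ c) :
    variationWith (fun x y => edist x y) γ a b
      + variationWith (fun x y => edist x y) γ b c
      ≤ variationWith (fun x y => edist x y) γ a c := by
  rw [variationWith_edist_eq γ hab, variationWith_edist_eq γ hbc,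
    variationWith_edist_eq γ (hab.trans hbc)]
  have h := eVariationOn.Icc_add_Icc γ (s := (Set.univ : Set ℝ)) hab hbc (Set.mem_univ b)
  simpa using h.le

lemma sum_variationWith_le (γ : ℝ → Y) {t : ℕ → ℝ} (ht : Monotone t) (n : ℕ) :
    ∑ i ∈ Finset.range n, variationWith (fun x y => edist x y) γ (t i) (t (i + 1))
      ≤ variationWith (fun x y => edist x y) γ (t 0) (t n) := by
  induction n with
  | zero => simp
  | succ n ih =>
      rw [Finset.sum_range_succ]
      calc _ ≤ variationWith (fun x y => edist x y) γ (t 0) (t n)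
              + variationWith (fun x y => edist x y) γ (t n) (t (n + 1)) :=
            add_le_add ih le_rfl
        _ ≤ _ := variationWith_edist_add γ (ht (Nat.zero_le n)) (ht (Nat.le_succ n))

lemma variationWith_maz_le (S : Set Y) (γ : ℝ → Y) {a b : ℝ}
    (hcont : ContinuousOn γ (Set.Icc a b)) (hmaps : Set.MapsTo γ (Set.Icc a b) S) :
    variationWith (mazDist S) γ a b ≤ variationWith (fun x y => edist x y) γ a b := by
  refine iSup₂_le fun P hP => ?_
  obtain ⟨hmono, hmem, h0, hn⟩ := hP
  have key : ∀ i, mazDist S (γ (P.2 i)) (γ (P.2 (i + 1)))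
      ≤ variationWith (fun x y => edist x y) γ (P.2 i) (P.2 (i + 1)) := by
    intro i
    have hsub : Set.Icc (P.2 i) (P.2 (i + 1)) ⊆ Set.Icc a b :=
      Set.Icc_subset_Icc (hmem i).1 (hmem (i + 1)).2
    have hii : P.2 i ≤ P.2 (i + 1) := hmono (Nat.le_succ i)
    have hconn : IsConnected (γ '' Set.Icc (P.2 i) (P.2 (i + 1))) :=
      (isConnected_Icc hii).image γ (hcont.mono hsub)
    have hE : γ '' Set.Icc (P.2 i) (P.2 (i + 1)) ∈
        {E : Set Y | E ⊆ S ∧ IsConnected E ∧ γ (P.2 i) ∈ E ∧ γ (P.2 (i + 1)) ∈ E} :=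
      ⟨Set.image_subset_iff.2 fun x hx => hmaps (hsub hx), hconn,
        Set.mem_image_of_mem _ (Set.left_mem_Icc.2 hii),
        Set.mem_image_of_mem _ (Set.right_mem_Icc.2 hii)⟩
    refine le_trans (iInf₂_le _ hE) ?_
    rw [variationWith_edist_eq γ hii]
    refine EMetric.diam_le fun p hp q hq => ?_
    obtain ⟨x, hx, rfl⟩ := hp
    obtain ⟨y, hy, rfl⟩ := hq
    exact eVariationOn.edist_le γ hx hy
  calc ∑ i ∈ Finset.range P.1, mazDist S (γ (P.2 i)) (γ (P.2 (i + 1)))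
      ≤ ∑ i ∈ Finset.range P.1,
          variationWith (fun x y => edist x y) γ (P.2 i) (P.2 (i + 1)) :=
        Finset.sum_le_sum fun i _ => key i
    _ ≤ variationWith (fun x y => edist x y) γ (P.2 0) (P.2 P.1) :=
        sum_variationWith_le γ hmono P.1
    _ = _ := by rw [h0, hn]

lemma continuousOn_of_arcLength {ρ : Y → Y → ℝ≥0∞} (hρ : ∀ x y, edist x y ≤ ρ x y)
    {γ : ℝ → Y} {L : ℝ} (h : IsArcLengthParamWith ρ γ L) :
    ContinuousOn γ (Set.Icc 0 L) := by
  have hlip : ∀ s ∈ Set.Icc (0 : ℝ) L, ∀ t ∈ Set.Icc (0 : ℝ) L, s ≤ t →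
      edist (γ s) (γ t) ≤ ENNReal.ofReal (t - s) := by
    intro s hs t ht hst
    calc edist (γ s) (γ t) ≤ ρ (γ s) (γ t) := hρ _ _
      _ ≤ variationWith ρ γ s t := rho_le_variationWith ρ γ hst
      _ = ENNReal.ofReal (t - s) := h s t hs ht hst
  have hL : LipschitzOnWith 1 γ (Set.Icc 0 L) := by
    intro s hs t ht
    rw [ENNReal.coe_one, one_mul, edist_dist (s : ℝ) t, Real.dist_eq]
    rcases le_total s t with hst | hst
    · refine (hlip s hs t ht hst).trans (ENNReal.ofReal_le_ofReal ?_)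
      rw [abs_sub_comm]
      exact le_abs_self _
    · rw [edist_comm]
      exact (hlip t ht s hs hst).trans (ENNReal.ofReal_le_ofReal (le_abs_self _))
  exact hL.continuousOn

lemma arcLength_iff (S : Set Y) {γ : ℝ → Y} {L : ℝ}
    (hmaps : Set.MapsTo γ (Set.Icc 0 L) S) :
    IsArcLengthParamWith (fun x y => edist x y) γ L
      ↔ IsArcLengthParamWith (mazDist S) γ L := by
  constructor
  · intro h
    have hcont : ContinuousOn γ (Set.Icc 0 L) :=
      continuousOn_of_arcLength (fun _ _ => le_rfl) h
    intro s t hs ht hst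
    apply le_antisymm
    · calc variationWith (mazDist S) γ s t
          ≤ variationWith (fun x y => edist x y) γ s t :=
            variationWith_maz_le S γ (hcont.mono (Set.Icc_subset_Icc hs.1 ht.2))
              (hmaps.mono_left (Set.Icc_subset_Icc hs.1 ht.2))
        _ = ENNReal.ofReal (t - s) := h s t hs ht hst
    · rw [← h s t hs ht hst]
      exact variationWith_mono (edist_le_mazDist S) γ s t
  · intro h
    have hcont : ContinuousOn γ (Set.Icc 0 L) :=
      continuousOn_of_arcLength (edist_le_mazDist S) h
    intro s t hs ht hst
    apply le_antisymm
    · rw [← h s t hs ht hst]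
      exact variationWith_mono (edist_le_mazDist S) γ s t
    · rw [← h s t hs ht hst]
      exact variationWith_maz_le S γ (hcont.mono (Set.Icc_subset_Icc hs.1 ht.2))
        (hmaps.mono_left (Set.Icc_subset_Icc hs.1 ht.2))

lemma upperGradient_iff_maz (S : Set Y) (g : Y → ℝ≥0∞) (f : Y → EReal) :
    IsUpperGradientOn S g f ↔ IsUpperGradientWith (mazDist S) S g f := by
  constructor
  · intro h γ L hL hmaps harc
    exact h γ L hL hmaps ((arcLength_iff S hmaps).2 harc)
  · intro h γ L hL hmaps harc
    exact h γ L hL hmaps ((arcLength_iff S hmaps).1 harc)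

end Helpers

/-! ### Statement 3 -/

theorem statement3 {X : Type*} [MetricSpace X] [MeasurableSpace X] [BorelSpace X]
    (μ : Measure X) (hμc : μ.IsComplete) (hball : BallRegular μ)
    (hX : QuasiconvexSpace X) (Ω : Set X) (hΩ : IsBoundedDomain Ω)
    (f : X → EReal) (hf : Measurable f) (g : X → ℝ≥0∞) (hg : Measurable g) :
    (IsUpperGradientOn Ω g f ↔ IsUpperGradientWith (mazDist Ω) Ω g f) ∧
    ∀ p : ℝ, 1 ≤ p → ∀ u : X → ℝ,
      npEnergyOn μ p Ω u = npEnergyWith μ p (mazDist Ω) Ω u := by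
  refine ⟨upperGradient_iff_maz Ω g f, fun p _hp u => ?_⟩
  unfold npEnergyOn npEnergyWith
  congr 1
  have hset : {g : X → ℝ≥0∞ | Measurable g ∧
        IsUpperGradientWith (fun x y => edist x y) Ω g (fun y => (u y : EReal))}
      = {g : X → ℝ≥0∞ | Measurable g ∧
        IsUpperGradientWith (mazDist Ω) Ω g (fun y => (u y : EReal))} := by
    ext g'
    exact and_congr_right fun _ => upperGradient_iff_maz Ω g' _
  rw [hset]

end
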